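/- Let X be a real normed linear space and let x ∈ X be nonzero. Then x⁺ \ x⁻ = (⋃_{f ∈ J(x)} {z : f(z) > 0}) ∩ (x^⊥_B)^c, and x⁻ \ x⁺ = (⋃_{f ∈ J(x)} {z : f(z) < 0}) ∩ (x^⊥_B)^c. -/

import Mathlib

/-- Birkhoff-James orthogonality. -/
def BJOrth {X : Type*} [NormedAddCommGroup X] [NormedSpace ℝ X] (x y : X) : Prop :=
  ∀ t : ℝ, ‖x‖ ≤ ‖x + t • y‖

/-- `y ∈ x⁺`. -/
def BJPlus {X : Type*} [NormedAddCommGroup X] [NormedSpace ℝ X] (x : X) : Set X :=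
  {y | ∀ t : ℝ, 0 ≤ t → ‖x‖ ≤ ‖x + t • y‖}

/-- `y ∈ x⁻`. -/
def BJMinus {X : Type*} [NormedAddCommGroup X] [NormedSpace ℝ X] (x : X) : Set X :=
  {y | ∀ t : ℝ, t ≤ 0 → ‖x‖ ≤ ‖x + t • y‖}

/-- The set of support functionals at `x`. -/
def suppFun {X : Type*} [NormedAddCommGroup X] [NormedSpace ℝ X] (x : X) :
    Set (X →L[ℝ] ℝ) := {f | ‖f‖ = 1 ∧ f x = ‖x‖}

section aux

variable {X : Type*} [NormedAddCommGroup X] [NormedSpace ℝ X]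

/-- difference quotient of the norm at `x` in direction `z` -/
noncomputable def bjQ (x z : X) (t : ℝ) : ℝ := (‖x + t • z‖ - ‖x‖) / t

/-- one-sided directional derivative (as an inf) of the norm at `x` in direction `z` -/
noncomputable def bjP (x z : X) : ℝ := sInf (bjQ x z '' Set.Ioi 0)

lemma bjQ_mono (x z : X) {s t : ℝ} (hs : 0 < s) (hst : s ≤ t) : bjQ x z s ≤ bjQ x z t := by
  have ht : 0 < t := lt_of_lt_of_le hs hst
  have key : t * ‖x + s • z‖ ≤ s * ‖x + t • z‖ + (t - s) * ‖x‖ := by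
    have hrw : t • (x + s • z) = s • (x + t • z) + (t - s) • x := by module
    calc t * ‖x + s • z‖ = ‖t • (x + s • z)‖ := by
          rw [norm_smul, Real.norm_eq_abs, abs_of_pos ht]
      _ = ‖s • (x + t • z) + (t - s) • x‖ := by rw [hrw]
      _ ≤ ‖s • (x + t • z)‖ + ‖(t - s) • x‖ := norm_add_le _ _
      _ = s * ‖x + t • z‖ + (t - s) * ‖x‖ := by
          rw [norm_smul, norm_smul, Real.norm_eq_abs, Real.norm_eq_abs,
            abs_of_pos hs, abs_of_nonneg (by linarith)]
  unfold bjQ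
  rw [div_le_div_iff₀ hs ht]
  linarith

lemma bjQ_le_norm (x z : X) {t : ℝ} (ht : 0 < t) : bjQ x z t ≤ ‖z‖ := by
  unfold bjQ
  rw [div_le_iff₀ ht]
  have : ‖x + t • z‖ ≤ ‖x‖ + t * ‖z‖ := by
    calc ‖x + t • z‖ ≤ ‖x‖ + ‖t • z‖ := norm_add_le _ _
      _ = ‖x‖ + t * ‖z‖ := by rw [norm_smul, Real.norm_eq_abs, abs_of_pos ht]
  linarith

lemma bjQ_ge (x z : X) {t : ℝ} (ht : 0 < t) : -‖z‖ ≤ bjQ x z t := by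
  unfold bjQ
  rw [le_div_iff₀ ht]
  have h1 : ‖x‖ ≤ ‖x + t • z‖ + ‖t • z‖ := by
    simpa using norm_add_le (x + t • z) (-(t • z))
  have h2 : ‖t • z‖ = t * ‖z‖ := by rw [norm_smul, Real.norm_eq_abs, abs_of_pos ht]
  nlinarith

lemma bjP_set_nonempty (x z : X) : (bjQ x z '' Set.Ioi 0).Nonempty :=
  ⟨bjQ x z 1, 1, Set.mem_Ioi.2 one_pos, rfl⟩

lemma bjP_bddBelow (x z : X) : BddBelow (bjQ x z '' Set.Ioi 0) := by
  refine ⟨-‖z‖, ?_⟩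
  rintro a ⟨t, ht, rfl⟩
  exact bjQ_ge x z (Set.mem_Ioi.1 ht)

lemma bjP_le_bjQ (x z : X) {t : ℝ} (ht : 0 < t) : bjP x z ≤ bjQ x z t :=
  csInf_le (bjP_bddBelow x z) ⟨t, Set.mem_Ioi.2 ht, rfl⟩

lemma bjP_le_norm (x z : X) : bjP x z ≤ ‖z‖ :=
  (bjP_le_bjQ x z one_pos).trans (bjQ_le_norm x z one_pos)

lemma le_bjP (x z : X) {c : ℝ} (h : ∀ t : ℝ, 0 < t → c ≤ bjQ x z t) : c ≤ bjP x z :=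
  le_csInf (bjP_set_nonempty x z) (by rintro a ⟨t, ht, rfl⟩; exact h t (Set.mem_Ioi.1 ht))

lemma bjQ_smul (x z : X) {c : ℝ} (hc : 0 < c) (t : ℝ) (ht : 0 < t) :
    bjQ x (c • z) t = c * bjQ x z (t * c) := by
  unfold bjQ
  rw [smul_smul]
  have ht0 : t ≠ 0 := ht.ne'
  have hc0 : c ≠ 0 := hc.ne'
  field_simp

lemma bjP_smul (x : X) {c : ℝ} (z : X) (hc : 0 < c) : bjP x (c • z) = c * bjP x z := by
  have hle : ∀ (c : ℝ), 0 < c → ∀ z : X, bjP x (c • z) ≤ c * bjP x z := by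
    intro c hc z
    refine le_of_forall_pos_le_add fun ε hε => ?_
    obtain ⟨a, ⟨t, ht, rfl⟩, hlt⟩ := Real.lt_sInf_add_pos (bjP_set_nonempty x z)
      (show (0:ℝ) < ε / c by positivity)
    have ht' : (0:ℝ) < t := Set.mem_Ioi.1 ht
    have h1 : bjP x (c • z) ≤ bjQ x (c • z) (t / c) := bjP_le_bjQ x _ (by positivity)
    rw [bjQ_smul x z hc _ (by positivity), div_mul_cancel₀ _ hc.ne'] at h1
    have hlt' : bjQ x z t < bjP x z + ε / c := hlt
    calc bjP x (c • z) ≤ c * bjQ x z t := h1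
      _ ≤ c * (bjP x z + ε / c) := by nlinarith [hlt', hc]
      _ = c * bjP x z + ε := by rw [mul_add, mul_div_cancel₀ _ hc.ne']
  refine le_antisymm (hle c hc z) ?_
  have h2 := hle c⁻¹ (by positivity) (c • z)
  rw [inv_smul_smul₀ hc.ne'] at h2
  have h3 := mul_le_mul_of_nonneg_left h2 hc.le
  rw [← mul_assoc, mul_inv_cancel₀ hc.ne', one_mul] at h3
  exact h3

lemma bjP_add (x z w : X) : bjP x (z + w) ≤ bjP x z + bjP x w := by
  refine le_of_forall_pos_le_add fun ε hε => ?_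
  obtain ⟨a, ⟨t1, ht1, rfl⟩, hlt1⟩ := Real.lt_sInf_add_pos (bjP_set_nonempty x z)
    (show (0:ℝ) < ε / 2 by positivity)
  obtain ⟨b, ⟨t2, ht2, rfl⟩, hlt2⟩ := Real.lt_sInf_add_pos (bjP_set_nonempty x w)
    (show (0:ℝ) < ε / 2 by positivity)
  have ht1' : (0:ℝ) < t1 := Set.mem_Ioi.1 ht1
  have ht2' : (0:ℝ) < t2 := Set.mem_Ioi.1 ht2
  set t := min t1 t2 with htdef
  have ht : 0 < t := lt_min ht1' ht2'
  have key : bjQ x (z + w) (t / 2) ≤ bjQ x z t + bjQ x w t := by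
    have hnorm : ‖x + (t / 2) • (z + w)‖ ≤ (‖x + t • z‖ + ‖x + t • w‖) / 2 := by
      have hrw : x + (t / 2) • (z + w) = (1/2 : ℝ) • ((x + t • z) + (x + t • w)) := by module
      rw [hrw, norm_smul, Real.norm_eq_abs, abs_of_pos (by norm_num : (0:ℝ) < 1/2)]
      have := norm_add_le (x + t • z) (x + t • w)
      linarith
    unfold bjQ
    rw [← add_div, div_le_div_iff₀ (by positivity) ht]
    nlinarith [hnorm]
  have h1 : bjP x (z + w) ≤ bjQ x (z + w) (t / 2) := bjP_le_bjQ x _ (by positivity)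
  have h2 : bjQ x z t ≤ bjQ x z t1 := bjQ_mono x z ht (min_le_left _ _)
  have h3 : bjQ x w t ≤ bjQ x w t2 := bjQ_mono x w ht (min_le_right _ _)
  have hlt1' : bjQ x z t1 < bjP x z + ε / 2 := hlt1
  have hlt2' : bjQ x w t2 < bjP x w + ε / 2 := hlt2
  linarith

lemma bjP_self (x : X) : bjP x x = ‖x‖ := by
  have h : ∀ t : ℝ, 0 < t → bjQ x x t = ‖x‖ := by
    intro t ht
    unfold bjQ
    have hrw : x + t • x = (1 + t) • x := by module
    rw [hrw, norm_smul, Real.norm_eq_abs, abs_of_pos (by linarith)]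
    field_simp
    ring
  refine le_antisymm ((bjP_le_bjQ x x one_pos).trans_eq (h 1 one_pos)) ?_
  exact le_bjP x x fun t ht => (h t ht).ge

lemma bjP_neg_self (x : X) : bjP x (-x) ≤ -‖x‖ := by
  have h := bjP_le_bjQ x (-x) one_pos
  unfold bjQ at h
  simpa using h

lemma bjP_zero (x : X) : bjP x 0 = 0 := by
  have h : ∀ t : ℝ, 0 < t → bjQ x (0 : X) t = 0 := by
    intro t ht; unfold bjQ; simp
  refine le_antisymm ((bjP_le_bjQ x 0 one_pos).trans_eq (h 1 one_pos)) ?_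
  exact le_bjP x 0 fun t ht => (h t ht).ge

/-- Key: if `y ∈ x⁺` then some support functional is nonneg at `y`. -/
lemma exists_suppFun_nonneg (x : X) (hx : x ≠ 0) {y : X} (hy : y ∈ BJPlus x) :
    ∃ f ∈ suppFun x, 0 ≤ f y := by
  by_cases hy0 : y = 0
  · obtain ⟨g, hg1, hg2⟩ := exists_dual_vector ℝ x (norm_ne_zero_iff.2 hx)
    exact ⟨g, ⟨hg1, by exact_mod_cast hg2⟩, by simp [hy0]⟩
  have hpy : 0 ≤ bjP x y := by
    refine le_bjP x y fun t ht => ?_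
    have h := hy t ht.le
    unfold bjQ
    have : 0 ≤ ‖x + t • y‖ - ‖x‖ := by linarith
    positivity
  set f : X →ₗ.[ℝ] ℝ := LinearPMap.mkSpanSingleton y (bjP x y) hy0 with hfdef
  have hdom : ∀ v : f.domain, f v ≤ bjP x v := by
    rintro ⟨v, hv⟩
    obtain ⟨c, rfl⟩ := Submodule.mem_span_singleton.1 hv
    have happ : f ⟨c • y, hv⟩ = c • bjP x y :=
      LinearPMap.mkSpanSingleton'_apply y (bjP x y) _ c hv
    rw [happ]
    show c • bjP x y ≤ bjP x (c • y)
    rcases lt_trichotomy c 0 with hc | hc | hc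
    · have hrw : c • y = (-c) • (-y) := by module
      rw [hrw, bjP_smul x (-y) (by linarith)]
      have hsum : 0 ≤ bjP x y + bjP x (-y) := by
        have h := bjP_add x y (-y)
        rw [show y + -y = (0:X) by module, bjP_zero] at h
        linarith
      simp only [smul_eq_mul]
      nlinarith
    · simp [hc, bjP_zero]
    · rw [bjP_smul x y hc]
      simp [smul_eq_mul]
  obtain ⟨g, hgf, hgle⟩ := exists_extension_of_le_sublinear f (bjP x)
    (fun c hc z => bjP_smul x z hc) (bjP_add x) hdom
  have hbound : ∀ z : X, ‖g z‖ ≤ 1 * ‖z‖ := by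
    intro z
    rw [one_mul, Real.norm_eq_abs, abs_le]
    constructor
    · have h1 := (hgle (-z)).trans (bjP_le_norm x (-z))
      rw [map_neg, norm_neg] at h1
      linarith
    · exact (hgle z).trans (bjP_le_norm x z)
  set G := g.mkContinuous 1 hbound with hGdef
  have hGapp : ∀ z, G z = g z := fun z => rfl
  have hgx : g x = ‖x‖ := by
    have h1 : g x ≤ ‖x‖ := (hgle x).trans_eq (bjP_self x)
    have h2 : g (-x) ≤ -‖x‖ := (hgle (-x)).trans (bjP_neg_self x)
    rw [map_neg] at h2
    linarith
  have hGx : G x = ‖x‖ := by rw [hGapp]; exact hgx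
  have hGy : 0 ≤ G y := by
    have hy_mem : y ∈ f.domain := Submodule.mem_span_singleton_self y
    have heq := hgf ⟨y, hy_mem⟩
    rw [LinearPMap.mkSpanSingleton'_apply_self] at heq
    rw [hGapp, heq]
    exact hpy
  have hGnorm : ‖G‖ = 1 := by
    refine le_antisymm (g.mkContinuous_norm_le zero_le_one hbound) ?_
    have h := G.le_opNorm x
    rw [hGx, Real.norm_eq_abs, abs_of_nonneg (norm_nonneg x)] at h
    have hxn : 0 < ‖x‖ := norm_pos_iff.2 hx
    nlinarith
  exact ⟨G, ⟨hGnorm, hGx⟩, hGy⟩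

lemma mem_bjPlus_of_suppFun {x y : X} {f : X →L[ℝ] ℝ} (hf : f ∈ suppFun x) (h : 0 ≤ f y) :
    y ∈ BJPlus x := by
  intro t ht
  have h2 := f.le_opNorm (x + t • y)
  rw [Real.norm_eq_abs, hf.1, one_mul] at h2
  have h3 : f (x + t • y) = f x + t * f y := by
    rw [map_add, map_smul]; rfl
  have h4 : f x = ‖x‖ := hf.2
  have h5 : f (x + t • y) ≤ |f (x + t • y)| := le_abs_self _
  nlinarith

lemma bjMinus_iff_neg (x y : X) : y ∈ BJMinus x ↔ (-y) ∈ BJPlus x := by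
  constructor
  · intro h t ht
    have := h (-t) (by linarith)
    simpa using this
  · intro h t ht
    have := h (-t) (by linarith)
    simpa using this

lemma mem_bjMinus_of_suppFun {x y : X} {f : X →L[ℝ] ℝ} (hf : f ∈ suppFun x) (h : f y ≤ 0) :
    y ∈ BJMinus x := by
  rw [bjMinus_iff_neg]
  exact mem_bjPlus_of_suppFun hf (by rw [map_neg]; linarith)

lemma exists_suppFun_nonpos (x : X) (hx : x ≠ 0) {y : X} (hy : y ∈ BJMinus x) :
    ∃ f ∈ suppFun x, f y ≤ 0 := by
  obtain ⟨f, hf, h⟩ := exists_suppFun_nonneg x hx ((bjMinus_iff_neg x y).1 hy)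
  refine ⟨f, hf, ?_⟩
  rw [map_neg] at h
  linarith

lemma bjOrth_iff (x y : X) : BJOrth x y ↔ y ∈ BJPlus x ∧ y ∈ BJMinus x := by
  constructor
  · exact fun h => ⟨fun t _ => h t, fun t _ => h t⟩
  · rintro ⟨h1, h2⟩ t
    rcases le_or_gt 0 t with ht | ht
    exacts [h1 t ht, h2 t ht.le]

end aux

theorem stmt_3 {X : Type*} [NormedAddCommGroup X] [NormedSpace ℝ X]
    (x : X) (hx : x ≠ 0) :
    BJPlus x \ BJMinus x =
      (⋃ f ∈ suppFun x, {z : X | 0 < f z}) ∩ {y : X | BJOrth x y}ᶜ ∧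
    BJMinus x \ BJPlus x =
      (⋃ f ∈ suppFun x, {z : X | f z < 0}) ∩ {y : X | BJOrth x y}ᶜ := by
  constructor
  · ext y
    simp only [Set.mem_diff, Set.mem_inter_iff, Set.mem_iUnion, Set.mem_compl_iff,
      Set.mem_setOf_eq]
    constructor
    · rintro ⟨hP, hM⟩
      obtain ⟨f, hf, hfy⟩ := exists_suppFun_nonneg x hx hP
      have hpos : 0 < f y := by
        rcases hfy.lt_or_eq with h | h
        · exact h
        · exact absurd (mem_bjMinus_of_suppFun hf h.ge) hM
      exact ⟨⟨f, hf, hpos⟩, fun ho => hM ((bjOrth_iff x y).1 ho).2⟩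
    · rintro ⟨⟨f, hf, hpos⟩, ho⟩
      have hP := mem_bjPlus_of_suppFun hf hpos.le
      exact ⟨hP, fun hM => ho ((bjOrth_iff x y).2 ⟨hP, hM⟩)⟩
  · ext y
    simp only [Set.mem_diff, Set.mem_inter_iff, Set.mem_iUnion, Set.mem_compl_iff,
      Set.mem_setOf_eq]
    constructor
    · rintro ⟨hM, hP⟩
      obtain ⟨f, hf, hfy⟩ := exists_suppFun_nonpos x hx hM
      have hneg : f y < 0 := by
        rcases hfy.lt_or_eq with h | h
        · exact h
        · exact absurd (mem_bjPlus_of_suppFun hf h.ge) hP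
      exact ⟨⟨f, hf, hneg⟩, fun ho => hP ((bjOrth_iff x y).1 ho).1⟩
    · rintro ⟨⟨f, hf, hneg⟩, ho⟩
      have hM := mem_bjMinus_of_suppFun hf hneg.le
      exact ⟨hM, fun hP => ho ((bjOrth_iff x y).2 ⟨hP, hM⟩)⟩
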